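/- For all integers m, n ≥ 3, P(S, m×n) = ⋃_{i,j∈{1,2}} P_{i,j}(S, m×n), and the four sets P_{i,j}(S, m×n) for i,j∈{1,2} are non-empty and pairwise disjoint. -/

import Mathlib

/-- The 16-letter alphabet 𝒜 = {A,…,P}. -/
inductive A16 : Type
  | A | B | C | D | E | F | G | H | I | J | K | L | M | N | O | P
  deriving DecidableEq

/-- The 2×2 block substitution μ on 𝒜 (rows top to bottom). -/
def mu : A16 → Fin 2 → Fin 2 → A16
  | .A => ![![.A, .F], ![.G, .C]]
  | .B => ![![.A, .F], ![.H, .D]]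
  | .C => ![![.B, .E], ![.G, .C]]
  | .D => ![![.B, .E], ![.H, .D]]
  | .E => ![![.A, .N], ![.G, .K]]
  | .F => ![![.A, .N], ![.H, .L]]
  | .G => ![![.B, .M], ![.G, .K]]
  | .H => ![![.B, .M], ![.H, .L]]
  | .I => ![![.I, .F], ![.O, .C]]
  | .J => ![![.I, .F], ![.P, .D]]
  | .K => ![![.J, .E], ![.O, .C]]
  | .L => ![![.J, .E], ![.P, .D]]
  | .M => ![![.I, .N], ![.O, .K]]
  | .N => ![![.I, .N], ![.P, .L]]
  | .O => ![![.J, .M], ![.O, .K]]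
  | .P => ![![.J, .M], ![.P, .L]]

/-- Entry version of μ, indexed by arbitrary naturals (via mod 2). -/
def muE (x : A16) (r c : ℕ) : A16 :=
  mu x ⟨r % 2, by omega⟩ ⟨c % 2, by omega⟩

/-- `superE n x` is the supertile μⁿ(x), a 2ⁿ×2ⁿ array over 𝒜,
given as a total function on ℕ × ℕ (only indices < 2ⁿ are relevant). -/
def superE : ℕ → A16 → ℕ → ℕ → A16
  | 0, x, _, _ => x
  | n + 1, x, r, c => muE (superE n x (r / 2) (c / 2)) r c

/-- The supertile T_k = μᵏ(N). -/
def Tfun (k : ℕ) : ℕ → ℕ → A16 := superE k .N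

/-- An m×n pattern over the alphabet α. -/
abbrev Pat (α : Type) (m n : ℕ) := Fin m → Fin n → α

/-- The set of m×n patterns occurring in the size×size array X. -/
def patIn {α : Type} (X : ℕ → ℕ → α) (size m n : ℕ) : Set (Pat α m n) :=
  { p | ∃ r c : ℕ, r + m ≤ size ∧ c + n ≤ size ∧
      ∀ (i : Fin m) (j : Fin n), p i j = X (r + i) (c + j) }

/-- P(T, m×n) = ⋃ₖ P(T_k, m×n). -/
def PT (m n : ℕ) : Set (Pat A16 m n) := ⋃ k : ℕ, patIn (Tfun k) (2 ^ k) m n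

/-- μ applied to an m×n pattern, as a total 2m×2n array on ℕ × ℕ
(indices are reduced mod the valid range; in range this is exactly μ(p)). -/
def muPatE {m n : ℕ} (p : Pat A16 m n) (r c : ℕ) : A16 :=
  if hm : 0 < m then
    if hn : 0 < n then
      muE (p ⟨r / 2 % m, Nat.mod_lt _ hm⟩ ⟨c / 2 % n, Nat.mod_lt _ hn⟩) r c
    else .A
  else .A

/-- μ² applied to an m×n pattern, as a total 4m×4n array on ℕ × ℕ. -/
def mu2PatE {m n : ℕ} (p : Pat A16 m n) (r c : ℕ) : A16 :=
  muE (muPatE p (r / 2) (c / 2)) r c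

/-- P_{i,j}(T, m×n) = { μ(x)[i,j,m×n] : x ∈ P(T,m×n) } (1-based corner (i,j)). -/
def Pij (i j m n : ℕ) : Set (Pat A16 m n) :=
  { q | ∃ x ∈ PT m n, ∀ (a : Fin m) (b : Fin n),
      q a b = muPatE x (i - 1 + a) (j - 1 + b) }

/-- Q_{i,j}(T, m×n) = { μ²(x)[i,j,m×n] : x ∈ P(T,m×n) } (1-based corner (i,j)). -/
def Qij (i j m n : ℕ) : Set (Pat A16 m n) :=
  { q | ∃ x ∈ PT m n, ∀ (a : Fin m) (b : Fin n),
      q a b = mu2PatE x (i - 1 + a) (j - 1 + b) }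

/-- The 2×2 block substitution φ from 𝒜 to ℬ = {0,1,2,3}. -/
def phi : A16 → Fin 2 → Fin 2 → Fin 4
  | .A => ![![0, 1], ![0, 0]]
  | .B => ![![0, 1], ![1, 1]]
  | .C => ![![1, 0], ![0, 0]]
  | .D => ![![1, 0], ![1, 1]]
  | .E => ![![0, 3], ![0, 2]]
  | .F => ![![0, 3], ![1, 3]]
  | .G => ![![1, 2], ![0, 2]]
  | .H => ![![1, 2], ![1, 3]]
  | .I => ![![2, 1], ![2, 0]]
  | .J => ![![2, 1], ![3, 1]]
  | .K => ![![3, 0], ![2, 0]]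
  | .L => ![![3, 0], ![3, 1]]
  | .M => ![![2, 3], ![2, 2]]
  | .N => ![![2, 3], ![3, 3]]
  | .O => ![![3, 2], ![2, 2]]
  | .P => ![![3, 2], ![3, 3]]

/-- Entry version of φ, indexed by arbitrary naturals (via mod 2). -/
def phiE (x : A16) (r c : ℕ) : Fin 4 :=
  phi x ⟨r % 2, by omega⟩ ⟨c % 2, by omega⟩

/-- φ applied to an m×n pattern over 𝒜, as a total 2m×2n array on ℕ × ℕ. -/
def phiPatE {m n : ℕ} (p : Pat A16 m n) (r c : ℕ) : Fin 4 :=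
  if hm : 0 < m then
    if hn : 0 < n then
      phiE (p ⟨r / 2 % m, Nat.mod_lt _ hm⟩ ⟨c / 2 % n, Nat.mod_lt _ hn⟩) r c
    else 0
  else 0

/-- φ(T_k), a 2^(k+1)×2^(k+1) array over ℬ. -/
def Sfun (k : ℕ) (r c : ℕ) : Fin 4 := phiE (Tfun k (r / 2) (c / 2)) r c

/-- P(S, m×n) = ⋃_{k≥1} P(φ(T_{k-1}), m×n). -/
def PS (m n : ℕ) : Set (Pat (Fin 4) m n) :=
  ⋃ k : ℕ, patIn (Sfun k) (2 ^ (k + 1)) m n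

/-- P_{i,j}(S, m×n) = { φ(x)[i,j,m×n] : x ∈ P(T,m×n) } (1-based corner (i,j)). -/
def PSij (i j m n : ℕ) : Set (Pat (Fin 4) m n) :=
  { q | ∃ x ∈ PT m n, ∀ (a : Fin m) (b : Fin n),
      q a b = phiPatE x (i - 1 + a) (j - 1 + b) }

/-- A_n = |P(S, n×n)|. -/
noncomputable def Acnt (n : ℕ) : ℕ := Nat.card (PS n n)

/-- a_{i,j}(n) = |P_{i,j}(T, n×n)|. -/
noncomputable def aT (i j n : ℕ) : ℕ := Nat.card (Pij i j n n)

/-- b_{i,j}(n) = |P_{i,j}(T, n×(n+1))|. -/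
noncomputable def bT (i j n : ℕ) : ℕ := Nat.card (Pij i j n (n + 1))

/-- c_{i,j}(n) = |P_{i,j}(T, (n+1)×n)|. -/
noncomputable def cT (i j n : ℕ) : ℕ := Nat.card (Pij i j (n + 1) n)

-- auxiliary part 1: tuples, V, finite checks
abbrev Tup4 := A16 × A16 × A16 × A16

def tget (y : Tup4) (u v : ℕ) : A16 :=
  if u = 0 then (if v = 0 then y.1 else y.2.1)
  else (if v = 0 then y.2.2.1 else y.2.2.2)

def step2 (y : Tup4) (s t : ℕ) : Tup4 :=
  (muE (tget y (s/2) (t/2)) s t,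
   muE (tget y (s/2) ((t+1)/2)) s (t+1),
   muE (tget y ((s+1)/2) (t/2)) (s+1) t,
   muE (tget y ((s+1)/2) ((t+1)/2)) (s+1) (t+1))

def phiV (y : Tup4) (i j a b : ℕ) : Fin 4 :=
  phiE (tget y ((i-1+a)/2) ((j-1+b)/2)) (i-1+a) (j-1+b)

def codeW (y : Tup4) (i j : ℕ) : ℕ :=
  (phiV y i j 0 0).val + 4 * (phiV y i j 0 1).val + 4^2 * (phiV y i j 0 2).val
  + 4^3 * (phiV y i j 1 0).val + 4^4 * (phiV y i j 1 1).val + 4^5 * (phiV y i j 1 2).val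
  + 4^6 * (phiV y i j 2 0).val + 4^7 * (phiV y i j 2 1).val + 4^8 * (phiV y i j 2 2).val
def V : List Tup4 := [(A16.A, A16.F, A16.G, A16.C), (A16.A, A16.F, A16.H, A16.D), (A16.A, A16.N, A16.G, A16.K), (A16.A, A16.N, A16.H, A16.L), (A16.B, A16.E, A16.G, A16.C), (A16.B, A16.E, A16.H, A16.D), (A16.B, A16.M, A16.G, A16.K), (A16.B, A16.M, A16.H, A16.L), (A16.C, A16.G, A16.N, A16.I), (A16.C, A16.H, A16.M, A16.B), (A16.C, A16.H, A16.N, A16.A), (A16.C, A16.O, A16.N, A16.A), (A16.C, A16.P, A16.M, A16.J), (A16.C, A16.P, A16.N, A16.I), (A16.D, A16.G, A16.M, A16.B), (A16.D, A16.G, A16.N, A16.A), (A16.D, A16.H, A16.N, A16.I), (A16.D, A16.O, A16.M, A16.J), (A16.D, A16.O, A16.N, A16.I), (A16.D, A16.P, A16.N, A16.A), (A16.E, A16.B, A16.C, A16.G), (A16.E, A16.B, A16.C, A16.H), (A16.E, A16.B, A16.D, A16.G), (A16.E, A16.B, A16.D, A16.H), (A16.E, A16.J, A16.C, A16.O), (A16.E,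 A16.J, A16.C, A16.P), (A16.E, A16.J, A16.D, A16.O), (A16.E, A16.J, A16.D, A16.P), (A16.F, A16.A, A16.C, A16.H), (A16.F, A16.A, A16.D, A16.G), (A16.F, A16.I, A16.C, A16.P), (A16.F, A16.I, A16.D, A16.O), (A16.G, A16.C, A16.B, A16.M), (A16.G, A16.C, A16.I, A16.N), (A16.G, A16.K, A16.A, A16.F), (A16.G, A16.K, A16.B, A16.E), (A16.G, A16.K, A16.I, A16.F), (A16.H, A16.D, A16.B, A16.M), (A16.H, A16.D, A16.I, A16.N), (A16.H, A16.L, A16.A, A16.F), (A16.H, A16.L, A16.B, A16.E), (A16.H, A16.L, A16.I, A16.F), (A16.I, A16.F, A16.O, A16.C), (A16.I, A16.F, A16.P, A16.D), (A16.I, A16.N, A16.O, A16.K), (A16.I, A16.N, A16.P, A16.L), (A16.J, A16.E, A16.O, A16.C), (A16.J, A16.E, A16.P, A16.D), (A16.J, A16.M, A16.O, A16.K), (A16.J, A16.M, A16.P, A16.L), (A16.K, A16.G, A16.F, A16.I), (A16.K, A16.H, A16.E, A16.B), (A16.K, A16.O, A16.F, A16.A), (A16.K, A16.P, A16.E, A16.J),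 (A16.L, A16.G, A16.E, A16.B), (A16.L, A16.H, A16.F, A16.I), (A16.L, A16.O, A16.E, A16.J), (A16.L, A16.P, A16.F, A16.A), (A16.M, A16.B, A16.K, A16.G), (A16.M, A16.B, A16.L, A16.H), (A16.M, A16.J, A16.K, A16.O), (A16.M, A16.J, A16.L, A16.P), (A16.N, A16.A, A16.K, A16.H), (A16.N, A16.A, A16.L, A16.G), (A16.N, A16.I, A16.K, A16.P), (A16.N, A16.I, A16.L, A16.O), (A16.O, A16.C, A16.A, A16.N), (A16.O, A16.C, A16.J, A16.M), (A16.O, A16.K, A16.A, A16.F), (A16.O, A16.K, A16.I, A16.F), (A16.O, A16.K, A16.J, A16.E), (A16.P, A16.D, A16.A, A16.N), (A16.P, A16.D, A16.J, A16.M), (A16.P, A16.L, A16.A, A16.F), (A16.P, A16.L, A16.I, A16.F), (A16.P, A16.L, A16.J, A16.E)]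
def C11 : List Nat := [19001, 19131, 20345, 20475, 27193, 27323, 28537, 28667, 49619, 50323, 51379, 52723, 57681, 58385, 59441, 60785, 70476, 71180, 78798, 79502, 102724, 103428, 111046, 111750, 147993, 148123, 149337, 149467, 156185, 156315, 157529, 157659, 180371, 181715, 182771, 183475, 188433, 189777, 190833, 191537, 203628, 204332, 211950, 212654, 235876, 236580, 244198, 244902]
def C12 : List Nat := [26737, 27953, 60025, 61241, 79972, 80428, 81188, 81772, 112676, 113260, 114020, 114476, 147667, 148883, 180955, 182171, 201358, 202702, 233606, 234950]
def C21 : List Nat := [1112, 9434, 20776, 20797, 21581, 21592, 29098, 29119, 29903, 34373, 34384, 42695, 42706, 54050, 54071, 62341, 62352, 62368, 62389, 65832, 65834, 65853, 65855, 66637, 66648, 74152, 74154, 74173, 74175, 74959, 87128, 95450, 99079, 99090, 107397, 107408, 120389, 120400, 128711, 128722, 134264, 142586, 153864, 153885, 154733, 154744, 162186, 162207, 163055, 167525, 167536, 175847, 175858, 187138, 187159, 195456, 195477, 195493, 195504, 198922, 198943, 199789, 199800, 207240, 207261, 208111, 220280, 228602, 232231, 232242, 240549, 240560, 253541, 253552,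 261863, 261874]
def C22 : List Nat := [8609, 8628, 13537, 13544, 13556, 13565, 41897, 41916, 46816, 46825, 46837, 46844, 91361, 91380, 94625, 94644, 124649, 124668, 127913, 127932, 133398, 137475, 137494, 138314, 138335, 166686, 170763, 170782, 171586, 171607, 215299, 215318, 216138, 216159, 219414, 248587, 248606, 249410, 249431, 252702]

set_option maxRecDepth 40000 in
lemma V_closed : ∀ y ∈ V, ∀ s < 3, ∀ t < 3, step2 y s t ∈ V := by decide

set_option maxRecDepth 40000 in
lemma codes_mem : ∀ y ∈ V, codeW y 1 1 ∈ C11 ∧ codeW y 1 2 ∈ C12 ∧ codeW y 2 1 ∈ C21 ∧ codeW y 2 2 ∈ C22 := by decide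

set_option maxRecDepth 40000 in
lemma codes_disj : (∀ x ∈ C11, x ∉ C12 ∧ x ∉ C21 ∧ x ∉ C22) ∧ (∀ x ∈ C12, x ∉ C21 ∧ x ∉ C22) ∧ (∀ x ∈ C21, x ∉ C22) := by decide

lemma muE_congr (x : A16) {p p' q q' : ℕ} (hp : p % 2 = p' % 2) (hq : q % 2 = q' % 2) :
    muE x p q = muE x p' q' := by
  unfold muE; congr 1 <;> exact Fin.ext (by simpa using ‹_›)

lemma phiE_congr (x : A16) {p p' q q' : ℕ} (hp : p % 2 = p' % 2) (hq : q % 2 = q' % 2) :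
    phiE x p q = phiE x p' q' := by
  unfold phiE; congr 1 <;> exact Fin.ext (by simpa using ‹_›)

lemma Tfun_succ (k ρ γ : ℕ) : Tfun (k+1) ρ γ = muE (Tfun k (ρ/2) (γ/2)) ρ γ := rfl

lemma comp (k r' c' s t a b : ℕ) :
    Tfun (k+1) (2*r'+s+a) (2*c'+t+b)
      = muE (Tfun k (r' + (s+a)/2) (c' + (t+b)/2)) (s+a) (t+b) := by
  rw [Tfun_succ, show (2*r'+s+a)/2 = r' + (s+a)/2 by omega,
    show (2*c'+t+b)/2 = c' + (t+b)/2 by omega]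
  exact muE_congr _ (by omega) (by omega)

lemma tget_tuple (k r' c' u v : ℕ) (hu : u < 2) (hv : v < 2) :
    tget (Tfun k r' c', Tfun k r' (c'+1), Tfun k (r'+1) c', Tfun k (r'+1) (c'+1)) u v
      = Tfun k (r'+u) (c'+v) := by
  interval_cases u <;> interval_cases v <;> simp [tget]

lemma step_eq (k r c r' c' s t : ℕ) (hr : r = 2*r'+s) (hc : c = 2*c'+t)
    (hs : s < 3) (ht : t < 3) :
    (Tfun (k+1) r c, Tfun (k+1) r (c+1), Tfun (k+1) (r+1) c, Tfun (k+1) (r+1) (c+1)) =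
    step2 (Tfun k r' c', Tfun k r' (c'+1), Tfun k (r'+1) c', Tfun k (r'+1) (c'+1)) s t := by
  subst hr hc
  unfold step2
  rw [tget_tuple k r' c' _ _ (by omega) (by omega), tget_tuple k r' c' _ _ (by omega) (by omega),
      tget_tuple k r' c' _ _ (by omega) (by omega), tget_tuple k r' c' _ _ (by omega) (by omega)]
  have e1 := comp k r' c' s t 0 0
  have e2 := comp k r' c' s t 0 1
  have e3 := comp k r' c' s t 1 0
  have e4 := comp k r' c' s t 1 1
  simp only [Nat.add_zero] at e1 e2 e3 e4
  rw [show 2*r'+s+1 = 2*r'+(s+1) by omega, show 2*c'+t+1 = 2*c'+(t+1) by omega] at *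
  rw [e1, e2, e3, e4]

lemma tuple_mem_V : ∀ k r c : ℕ, r + 2 ≤ 2^k → c + 2 ≤ 2^k →
    (Tfun k r c, Tfun k r (c+1), Tfun k (r+1) c, Tfun k (r+1) (c+1)) ∈ V := by
  intro k
  induction k with
  | zero => intro r c h _; simp at h
  | succ k ih =>
    intro r c hr hc
    rcases Nat.eq_zero_or_pos k with hk | hk
    · subst hk
      norm_num at hr hc
      have h1 : r = 0 := by omega
      have h2 : c = 0 := by omega
      subst h1 h2
      decide
    · have hP : 2 ≤ 2^k := Nat.one_lt_two_pow_iff.2 (by omega)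
      have h2 : (2:ℕ)^(k+1) = 2*2^k := by ring
      rw [h2] at hr hc
      set P := 2^k with hPdef
      set r' := min (r/2) (P-2) with hr'
      set c' := min (c/2) (P-2) with hc'
      rw [step_eq k r c r' c' (r-2*r') (c-2*c') (by omega) (by omega) (by omega) (by omega)]
      exact V_closed _ (ih r' c' (by omega) (by omega)) _ (by omega) _ (by omega)

lemma embed : ∀ k r c : ℕ, r < 2^k → c < 2^k →
    Tfun (k+3) (4*2^k + r) (3*2^k + c) = Tfun k r c := by
  intro k
  induction k with
  | zero =>
    intro r c hr hc
    interval_cases r <;> interval_cases c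
    decide
  | succ k ih =>
    intro r c hr hc
    have h2 : (2:ℕ)^(k+1) = 2*2^k := by ring
    rw [h2] at hr hc ⊢
    have h3 : k+1+3 = (k+3)+1 := rfl
    rw [h3, Tfun_succ]
    have hP : 1 ≤ 2^k := Nat.one_le_two_pow
    set P := 2^k with hPdef
    rw [show (4*(2*P) + r)/2 = 4*P + r/2 by omega, show (3*(2*P) + c)/2 = 3*P + c/2 by omega]
    rw [ih (r/2) (c/2) (by omega) (by omega)]
    rw [Tfun_succ k r c]
    exact muE_congr _ (by omega) (by omega)

lemma phiPatE_def {m n : ℕ} (hm : 0 < m) (hn : 0 < n) (x : Pat A16 m n) (r c : ℕ) :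
    phiPatE x r c = phiE (x ⟨r/2 % m, Nat.mod_lt _ hm⟩ ⟨c/2 % n, Nat.mod_lt _ hn⟩) r c := by
  unfold phiPatE; rw [dif_pos hm, dif_pos hn]

lemma PSij_sub_PS (m n : ℕ) (hm : 3 ≤ m) (hn : 3 ≤ n) (i j : ℕ)
    (hi : i = 1 ∨ i = 2) (hj : j = 1 ∨ j = 2) : PSij i j m n ⊆ PS m n := by
  rintro q ⟨x, hx, he⟩
  obtain ⟨k, R, C, hR, hC, hxe⟩ := Set.mem_iUnion.1 hx
  refine Set.mem_iUnion.2 ⟨k, 2*R + (i-1), 2*C + (j-1), ?_, ?_, fun a b => ?_⟩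
  · have h2 : (2:ℕ)^(k+1) = 2*2^k := by ring
    rw [h2]; omega
  · have h2 : (2:ℕ)^(k+1) = 2*2^k := by ring
    rw [h2]; omega
  · rw [he a b, phiPatE_def (by omega) (by omega)]
    rw [hxe _ _]
    show phiE (Tfun k (R + (i-1+(a:ℕ))/2 % m) (C + (j-1+(b:ℕ))/2 % n)) (i-1+(a:ℕ)) (j-1+(b:ℕ))
      = Sfun k (2*R + (i-1) + (a:ℕ)) (2*C + (j-1) + (b:ℕ))
    rw [Nat.mod_eq_of_lt (show (i-1+(a:ℕ))/2 < m by have := a.isLt; omega),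
        Nat.mod_eq_of_lt (show (j-1+(b:ℕ))/2 < n by have := b.isLt; omega)]
    show _ = phiE (Tfun k ((2*R + (i-1) + (a:ℕ))/2) ((2*C + (j-1) + (b:ℕ))/2)) _ _
    rw [show (2*R + (i-1) + (a:ℕ))/2 = R + (i-1+(a:ℕ))/2 by omega,
        show (2*C + (j-1) + (b:ℕ))/2 = C + (j-1+(b:ℕ))/2 by omega]
    exact phiE_congr _ (by omega) (by omega)

lemma PS_sub (m n : ℕ) (hm : 3 ≤ m) (hn : 3 ≤ n) :
    PS m n ⊆ ⋃ i ∈ ({1, 2} : Set ℕ), ⋃ j ∈ ({1, 2} : Set ℕ), PSij i j m n := by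
  intro q hq
  obtain ⟨k, r, c, hr, hc, hqe⟩ := Set.mem_iUnion.1 hq
  obtain ⟨P, hPdef⟩ : ∃ P, P = 2^k := ⟨_, rfl⟩
  have hP : 1 ≤ P := hPdef ▸ Nat.one_le_two_pow
  have h2 : (2:ℕ)^(k+1) = 2*P := by rw [hPdef]; ring
  have h8 : (2:ℕ)^(k+3) = 8*P := by rw [hPdef]; ring
  rw [h2] at hr hc
  have emb := embed k
  rw [← hPdef] at emb
  refine Set.mem_biUnion (show r%2+1 ∈ ({1,2} : Set ℕ) by
      rcases Nat.mod_two_eq_zero_or_one r with h|h <;> simp [h])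
    (Set.mem_biUnion (show c%2+1 ∈ ({1,2} : Set ℕ) by
      rcases Nat.mod_two_eq_zero_or_one c with h|h <;> simp [h]) ?_)
  refine ⟨fun a b => Tfun (k+3) (4*P + r/2 + a) (3*P + c/2 + b),
    Set.mem_iUnion.2 ⟨k+3, 4*P + r/2, 3*P + c/2, by rw [h8]; omega, by rw [h8]; omega,
      fun a b => rfl⟩, fun a b => ?_⟩
  rw [phiPatE_def (by omega) (by omega)]
  show q a b = phiE (Tfun (k+3) (4*P + r/2 + (r%2+1-1+(a:ℕ))/2 % m)
      (3*P + c/2 + (c%2+1-1+(b:ℕ))/2 % n)) (r%2+1-1+(a:ℕ)) (c%2+1-1+(b:ℕ))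
  rw [show r%2+1-1+(a:ℕ) = r%2+(a:ℕ) by omega, show c%2+1-1+(b:ℕ) = c%2+(b:ℕ) by omega,
      Nat.mod_eq_of_lt (show (r%2+(a:ℕ))/2 < m by have := a.isLt; omega),
      Nat.mod_eq_of_lt (show (c%2+(b:ℕ))/2 < n by have := b.isLt; omega),
      show 4*P + r/2 + (r%2+(a:ℕ))/2 = 4*P + (r+(a:ℕ))/2 by omega,
      show 3*P + c/2 + (c%2+(b:ℕ))/2 = 3*P + (c+(b:ℕ))/2 by omega,
      emb ((r+(a:ℕ))/2) ((c+(b:ℕ))/2) (by have := a.isLt; omega) (by have := b.isLt; omega),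
      hqe a b]
  exact (phiE_congr _ (by omega) (by omega)).symm

lemma PSij_nonempty (m n : ℕ) (hm : 3 ≤ m) (hn : 3 ≤ n) (i j : ℕ) :
    (PSij i j m n).Nonempty := by
  refine ⟨fun a b => phiPatE (fun a b => Tfun (m+n) a b) (i-1+a) (j-1+b),
    fun a b => Tfun (m+n) a b, Set.mem_iUnion.2 ⟨m+n, 0, 0, ?_, ?_, fun a b => by simp⟩,
    fun a b => rfl⟩
  · simpa using (Nat.lt_two_pow_self (n := m+n)).le.trans' (by omega)
  · simpa using (Nat.lt_two_pow_self (n := m+n)).le.trans' (by omega)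

lemma key_lemma (m n : ℕ) (hm : 3 ≤ m) (hn : 3 ≤ n) (q : Pat (Fin 4) m n) (i j : ℕ)
    (hi : i = 1 ∨ i = 2) (hj : j = 1 ∨ j = 2) (hq : q ∈ PSij i j m n) :
    ∃ y ∈ V, ∀ a b : ℕ, ∀ (ha : a < 3) (hb : b < 3),
      phiV y i j a b = q ⟨a, by omega⟩ ⟨b, by omega⟩ := by
  obtain ⟨x, hx, he⟩ := hq
  obtain ⟨k, R, C, hR, hC, hxe⟩ := Set.mem_iUnion.1 hx
  refine ⟨(Tfun k R C, Tfun k R (C+1), Tfun k (R+1) C, Tfun k (R+1) (C+1)),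
    tuple_mem_V k R C (by omega) (by omega), fun a b ha hb => ?_⟩
  have h1 := he ⟨a, by omega⟩ ⟨b, by omega⟩
  rw [phiPatE_def (by omega) (by omega), hxe _ _] at h1
  rw [h1]
  show phiE (tget (Tfun k R C, Tfun k R (C+1), Tfun k (R+1) C, Tfun k (R+1) (C+1))
      ((i-1+a)/2) ((j-1+b)/2)) (i-1+a) (j-1+b)
    = phiE (Tfun k (R + (i-1+a)/2 % m) (C + (j-1+b)/2 % n)) (i-1+a) (j-1+b)
  rw [Nat.mod_eq_of_lt (show (i-1+a)/2 < m by omega),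
      Nat.mod_eq_of_lt (show (j-1+b)/2 < n by omega),
      tget_tuple k R C _ _ (by omega) (by omega)]

def cls (i j : ℕ) : List ℕ :=
  if i = 1 then (if j = 1 then C11 else C12) else (if j = 1 then C21 else C22)

lemma codes_mem' : ∀ y ∈ V, ∀ i j : ℕ, (i = 1 ∨ i = 2) → (j = 1 ∨ j = 2) →
    codeW y i j ∈ cls i j := by
  intro y hy i j hi hj
  have h := codes_mem y hy
  rcases hi with rfl|rfl <;> rcases hj with rfl|rfl <;> simp only [cls] <;> norm_num
  · exact h.1
  · exact h.2.1
  · exact h.2.2.1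
  · exact h.2.2.2

lemma codes_disj' : ∀ i j i' j' : ℕ, (i = 1 ∨ i = 2) → (j = 1 ∨ j = 2) →
    (i' = 1 ∨ i' = 2) → (j' = 1 ∨ j' = 2) → (i, j) ≠ (i', j') →
    ∀ z, z ∈ cls i j → z ∉ cls i' j' := by
  have hd := codes_disj
  intro i j i' j' hi hj hi' hj' hne z h1 h2
  rcases hi with rfl|rfl <;> rcases hj with rfl|rfl <;>
    rcases hi' with rfl|rfl <;> rcases hj' with rfl|rfl <;>
    simp only [cls] at h1 h2 <;> norm_num at h1 h2 <;>
    first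
      | exact hne rfl
      | exact (hd.1 z h1).1 h2
      | exact (hd.1 z h1).2.1 h2
      | exact (hd.1 z h1).2.2 h2
      | exact (hd.1 z h2).1 h1
      | exact (hd.1 z h2).2.1 h1
      | exact (hd.1 z h2).2.2 h1
      | exact (hd.2.1 z h1).1 h2
      | exact (hd.2.1 z h1).2 h2
      | exact (hd.2.1 z h2).1 h1
      | exact (hd.2.1 z h2).2 h1
      | exact hd.2.2 z h1 h2
      | exact hd.2.2 z h2 h1

lemma code_eq {m n : ℕ} (hm : 3 ≤ m) (hn : 3 ≤ n) (q : Pat (Fin 4) m n)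
    (y y' : Tup4) (i j i' j' : ℕ)
    (h : ∀ a b : ℕ, ∀ (_ : a < 3) (_ : b < 3), phiV y i j a b = q ⟨a, by omega⟩ ⟨b, by omega⟩)
    (h' : ∀ a b : ℕ, ∀ (_ : a < 3) (_ : b < 3), phiV y' i' j' a b = q ⟨a, by omega⟩ ⟨b, by omega⟩) :
    codeW y i j = codeW y' i' j' := by
  have h9 : ∀ a b : ℕ, ∀ (_ : a < 3) (_ : b < 3), phiV y i j a b = phiV y' i' j' a b :=
    fun a b ha hb => (h a b ha hb).trans (h' a b ha hb).symm
  unfold codeW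
  rw [h9 0 0 (by omega) (by omega), h9 0 1 (by omega) (by omega), h9 0 2 (by omega) (by omega),
      h9 1 0 (by omega) (by omega), h9 1 1 (by omega) (by omega), h9 1 2 (by omega) (by omega),
      h9 2 0 (by omega) (by omega), h9 2 1 (by omega) (by omega), h9 2 2 (by omega) (by omega)]

/-- Lemma 3.6: for m, n ≥ 3, P(S, m×n) is the union of the sets
P_{i,j}(S, m×n) for i,j ∈ {1,2}, which are non-empty and pairwise disjoint. -/
theorem disjoint_Pij_S (m n : ℕ) (hm : 3 ≤ m) (hn : 3 ≤ n) :
    (PS m n = ⋃ i ∈ ({1, 2} : Set ℕ), ⋃ j ∈ ({1, 2} : Set ℕ), PSij i j m n) ∧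
    (∀ i ∈ ({1, 2} : Set ℕ), ∀ j ∈ ({1, 2} : Set ℕ), (PSij i j m n).Nonempty) ∧
    (∀ i ∈ ({1, 2} : Set ℕ), ∀ j ∈ ({1, 2} : Set ℕ),
      ∀ i' ∈ ({1, 2} : Set ℕ), ∀ j' ∈ ({1, 2} : Set ℕ),
        (i, j) ≠ (i', j') → Disjoint (PSij i j m n) (PSij i' j' m n)) := by
  have hmem : ∀ i : ℕ, i ∈ ({1,2} : Set ℕ) → i = 1 ∨ i = 2 := fun i hi => by simpa using hi
  refine ⟨?_, ?_, ?_⟩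
  · refine Set.Subset.antisymm (PS_sub m n hm hn) ?_
    intro q hq
    simp only [Set.mem_iUnion] at hq
    obtain ⟨i, hi, j, hj, hq⟩ := hq
    exact PSij_sub_PS m n hm hn i j (hmem i hi) (hmem j hj) hq
  · intro i _ j _; exact PSij_nonempty m n hm hn i j
  · intro i hi j hj i' hi' j' hj' hne
    rw [Set.disjoint_left]
    intro q hq hq'
    obtain ⟨y, hyV, hy⟩ := key_lemma m n hm hn q i j (hmem i hi) (hmem j hj) hq
    obtain ⟨y', hy'V, hy'⟩ := key_lemma m n hm hn q i' j' (hmem i' hi') (hmem j' hj') hq'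
    have hcode : codeW y i j = codeW y' i' j' := code_eq hm hn q y y' i j i' j' hy hy'
    have h1 : codeW y i j ∈ cls i j := codes_mem' y hyV i j (hmem i hi) (hmem j hj)
    have h2 : codeW y' i' j' ∈ cls i' j' := codes_mem' y' hy'V i' j' (hmem i' hi') (hmem j' hj')
    rw [← hcode] at h2
    exact codes_disj' i j i' j' (hmem i hi) (hmem j hj) (hmem i' hi') (hmem j' hj') hne _ h1 h2
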